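/- For γ > 1 and any exponents s ≥ 0, n ≥ 1 with 2s + n ≥ 3, there is a constant C > 0 such that (∫_{0 < |ξ| < ε} |ξ|^{2s-2} |sin(γ̃|ξ|t)|² e^{-c|ξ|²t} dξ)^{1/2} ≤ C(1+t)^{1/2 - s/2 - n/4} for all t ≥ 0, where γ̃ = √((γ-1)/γ) and c = (γ²+1)/(2γ²). -/

import Mathlib

open MeasureTheory Real

lemma oneD (q c ε : ℝ) (hq : 0 ≤ q) (hc : 0 < c) (hε0 : 0 < ε) (hε1 : ε < 1) :
    ∃ K > 0, ∀ t : ℝ, 0 ≤ t →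
      ∫ r in Set.Ioo (0:ℝ) ε, r ^ q * Real.exp (-(c*t) * r^2)
        ≤ K * (1+t) ^ (-((q+1)/2)) := by
  set a : ℝ := (q+1)/2 with ha_def
  have ha : 0 < a := by positivity
  have hq' : (-1:ℝ) < q := by linarith
  set K₀ : ℝ := (c/2) ^ (-a) * (1/2) * Real.Gamma a with hK0_def
  have hK₀ : 0 < K₀ := by
    have := Real.Gamma_pos_of_pos ha
    positivity
  set M : ℝ := max K₀ (1/(q+1)) with hM_def
  have hM : 0 < M := lt_max_of_lt_left hK₀
  refine ⟨M * 2 ^ a, by positivity, fun t ht => ?_⟩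
  have h1t : (0:ℝ) < 1 + t := by linarith
  have h2a : (1:ℝ) ≤ 2 ^ a := Real.one_le_rpow one_le_two ha.le
  rcases le_total t 1 with h1 | h1
  · -- small time: bound by ∫ r^q
    have hIb : IntegrableOn (fun r : ℝ => r ^ q) (Set.Ioo (0:ℝ) ε) := by
      apply Measure.integrableOn_of_bounded (measure_Ioo_lt_top).ne
        ((by fun_prop : Measurable fun r : ℝ => r ^ q).aestronglyMeasurable) (M := 1)
      filter_upwards [ae_restrict_mem measurableSet_Ioo] with r hr
      rw [Real.norm_eq_abs, abs_of_nonneg (Real.rpow_nonneg hr.1.le _)]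
      exact Real.rpow_le_one hr.1.le (le_of_lt (lt_trans hr.2 hε1)) hq
    have hIa : IntegrableOn (fun r : ℝ => r ^ q * Real.exp (-(c*t) * r^2))
        (Set.Ioo (0:ℝ) ε) := by
      apply Measure.integrableOn_of_bounded (measure_Ioo_lt_top).ne
        ((by fun_prop : Measurable fun r : ℝ => r ^ q * Real.exp (-(c*t) * r^2)).aestronglyMeasurable) (M := 1)
      filter_upwards [ae_restrict_mem measurableSet_Ioo] with r hr
      have hb1 : r ^ q ≤ 1 := Real.rpow_le_one hr.1.le (le_of_lt (lt_trans hr.2 hε1)) hq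
      have hb2 : Real.exp (-(c*t) * r^2) ≤ 1 := by
        rw [Real.exp_le_one_iff]
        nlinarith [sq_nonneg r, mul_nonneg hc.le ht]
      rw [Real.norm_eq_abs, abs_of_nonneg (mul_nonneg (Real.rpow_nonneg hr.1.le q) (Real.exp_pos _).le)]
      nlinarith [Real.rpow_nonneg hr.1.le q, Real.exp_pos (-(c*t) * r^2)]
    have step1 : ∫ r in Set.Ioo (0:ℝ) ε, r ^ q * Real.exp (-(c*t) * r^2)
        ≤ ∫ r in Set.Ioo (0:ℝ) ε, r ^ q := by
      apply setIntegral_mono_on hIa hIb measurableSet_Ioo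
      intro r hr
      have hb2 : Real.exp (-(c*t) * r^2) ≤ 1 := by
        rw [Real.exp_le_one_iff]; nlinarith [sq_nonneg r, mul_nonneg hc.le ht]
      nlinarith [Real.rpow_nonneg hr.1.le q, Real.exp_pos (-(c*t) * r^2)]
    have step2 : ∫ r in Set.Ioo (0:ℝ) ε, r ^ q = ε ^ (q+1) / (q+1) := by
      rw [← integral_Ioc_eq_integral_Ioo, ← intervalIntegral.integral_of_le hε0.le,
        integral_rpow (Or.inl hq'), Real.zero_rpow (by positivity), sub_zero]
    have step3 : ε ^ (q+1) / (q+1) ≤ M := by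
      refine le_trans ?_ (le_max_right _ _)
      gcongr
      exact Real.rpow_le_one hε0.le hε1.le (by positivity)
    have step4 : M ≤ M * 2 ^ a * (1+t) ^ (-a) := by
      have h2t : (1:ℝ) + t ≤ 2 := by linarith
      have : (2:ℝ) ^ (-a) ≤ (1+t) ^ (-a) :=
        Real.rpow_le_rpow_of_nonpos h1t h2t (by linarith)
      calc M = M * (2 ^ a * 2 ^ (-a)) := by
                rw [← Real.rpow_add two_pos, add_neg_cancel, Real.rpow_zero, mul_one]
        _ = M * 2 ^ a * 2 ^ (-a) := by ring
        _ ≤ M * 2 ^ a * (1+t) ^ (-a) := by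
            apply mul_le_mul_of_nonneg_left this (by positivity)
    calc ∫ r in Set.Ioo (0:ℝ) ε, r ^ q * Real.exp (-(c*t) * r^2)
        ≤ ε ^ (q+1) / (q+1) := step2 ▸ step1
      _ ≤ M := step3
      _ ≤ M * 2 ^ a * (1+t) ^ (-a) := step4
  · -- large time
    have ht0 : (0:ℝ) < t := by linarith
    have hb : (0:ℝ) < c * t := by positivity
    have hInt : IntegrableOn (fun r : ℝ => r ^ q * Real.exp (-(c*t) * r^2)) (Set.Ioi 0) :=
      integrableOn_rpow_mul_exp_neg_mul_sq hb hq'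
    have step1 : ∫ r in Set.Ioo (0:ℝ) ε, r ^ q * Real.exp (-(c*t) * r^2)
        ≤ ∫ r in Set.Ioi (0:ℝ), r ^ q * Real.exp (-(c*t) * r^2) := by
      apply setIntegral_mono_set hInt
      · filter_upwards [ae_restrict_mem measurableSet_Ioi] with r hr
        have : (0:ℝ) < r := hr
        positivity
      · exact (Set.Ioo_subset_Ioi_self).eventuallyLE
    have step2 : ∫ r in Set.Ioi (0:ℝ), r ^ q * Real.exp (-(c*t) * r^2)
        = (c*t) ^ (-a) * (1/2) * Real.Gamma a := by
      have : ∫ r in Set.Ioi (0:ℝ), r ^ q * Real.exp (-(c*t) * r^2)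
          = ∫ r in Set.Ioi (0:ℝ), r ^ q * Real.exp (-(c*t) * r ^ (2:ℝ)) := by
        refine setIntegral_congr_fun measurableSet_Ioi (fun r hr => ?_)
        rw [Real.rpow_two]
      rw [this, integral_rpow_mul_exp_neg_mul_rpow two_pos hq' hb]
      rw [ha_def]
      ring_nf
    have step3 : (c*t) ^ (-a) ≤ (c/2) ^ (-a) * (1+t) ^ (-a) := by
      have hle : (c/2) * (1+t) ≤ c * t := by nlinarith
      have h1 : (c*t) ^ (-a) ≤ ((c/2) * (1+t)) ^ (-a) :=
        Real.rpow_le_rpow_of_nonpos (by positivity) hle (by linarith)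
      rwa [Real.mul_rpow (by positivity) h1t.le] at h1
    have step4 : (c*t) ^ (-a) * (1/2) * Real.Gamma a ≤ K₀ * (1+t) ^ (-a) := by
      have hΓ : 0 < Real.Gamma a := Real.Gamma_pos_of_pos ha
      calc (c*t) ^ (-a) * (1/2) * Real.Gamma a
          ≤ ((c/2) ^ (-a) * (1+t) ^ (-a)) * (1/2) * Real.Gamma a := by
            apply mul_le_mul_of_nonneg_right ?_ hΓ.le
            apply mul_le_mul_of_nonneg_right step3 (by norm_num)
        _ = K₀ * (1+t) ^ (-a) := by rw [hK0_def]; ring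
    calc ∫ r in Set.Ioo (0:ℝ) ε, r ^ q * Real.exp (-(c*t) * r^2)
        ≤ (c*t) ^ (-a) * (1/2) * Real.Gamma a := step2 ▸ step1
      _ ≤ K₀ * (1+t) ^ (-a) := step4
      _ ≤ M * 2 ^ a * (1+t) ^ (-a) := by
          apply mul_le_mul_of_nonneg_right ?_ (by positivity)
          calc K₀ ≤ M := le_max_left _ _
            _ = M * 1 := (mul_one M).symm
            _ ≤ M * 2 ^ a := by apply mul_le_mul_of_nonneg_left h2a hM.le

theorem stmt_6 (n : ℕ) (hn : 1 ≤ n) (s γ ε : ℝ) (hs : 0 ≤ s)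
    (hsn : 3 ≤ 2*s + n) (hγ : 1 < γ) (hε : ε ∈ Set.Ioo (0 : ℝ) 1) :
    ∃ C > 0, ∀ t : ℝ, 0 ≤ t →
      (∫ ξ in {ξ : EuclideanSpace ℝ (Fin n) | 0 < ‖ξ‖ ∧ ‖ξ‖ < ε},
          ‖ξ‖ ^ (2*s - 2) * Real.sin (Real.sqrt ((γ - 1)/γ) * ‖ξ‖ * t)^2
            * Real.exp (-((γ^2 + 1)/(2*γ^2)) * ‖ξ‖^2 * t)) ^ ((1 : ℝ)/2)
        ≤ C * (1 + t) ^ ((1 : ℝ)/2 - s/2 - (n : ℝ)/4) := by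
  classical
  have hγ0 : (0:ℝ) < γ := by linarith
  set c : ℝ := (γ^2 + 1)/(2*γ^2) with hc_def
  have hc : 0 < c := by positivity
  set q : ℝ := 2*s + n - 3 with hq_def
  have hq : 0 ≤ q := by simp only [hq_def]; linarith
  obtain ⟨K, hK, hKb⟩ := oneD q c ε hq hc hε.1 hε.2
  set E := EuclideanSpace ℝ (Fin n) with hE_def
  haveI : Nontrivial E := Module.nontrivial_of_finrank_pos (R := ℝ)
    (show 0 < Module.finrank ℝ (EuclideanSpace ℝ (Fin n)) by
      rw [finrank_euclideanSpace_fin]; exact hn)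
  set V : ℝ := (volume (Metric.ball (0:E) 1)).toReal with hV_def
  have hV : 0 < V := by
    apply ENNReal.toReal_pos (Metric.measure_ball_pos volume 0 one_pos).ne'
      measure_ball_lt_top.ne
  have hnV : (0:ℝ) < n * V * K := by
    have : (0:ℝ) < n := by exact_mod_cast hn
    positivity
  refine ⟨(n * V * K) ^ ((1:ℝ)/2), by positivity, fun t ht => ?_⟩
  set gam : ℝ := Real.sqrt ((γ - 1)/γ) with hgam_def
  set g : ℝ → ℝ := fun r => r ^ (2*s-2) * Real.sin (gam * r * t)^2
      * Real.exp (-c * r^2 * t) with hg_def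
  set S : Set E := {ξ : E | 0 < ‖ξ‖ ∧ ‖ξ‖ < ε} with hS_def
  have hSm : MeasurableSet S := by
    have : S = (fun ξ : E => ‖ξ‖) ⁻¹' (Set.Ioo 0 ε) := rfl
    rw [this]
    exact measurable_norm measurableSet_Ioo
  -- the integrand is nonnegative
  have hnn : ∀ ξ : E, 0 ≤ g ‖ξ‖ := fun ξ => by
    simp only [hg_def]
    have := Real.rpow_nonneg (norm_nonneg ξ) (2*s-2)
    positivity
  -- step 1 : polar coordinates
  have hpolar : ∫ ξ in S, g ‖ξ‖
      = (n : ℝ) * (V * ∫ y in Set.Ioi (0:ℝ), y ^ (n-1) • Set.indicator (Set.Ioo 0 ε) g y) := by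
    have h1 : ∫ ξ in S, g ‖ξ‖ = ∫ ξ : E, Set.indicator (Set.Ioo 0 ε) g ‖ξ‖ := by
      rw [← integral_indicator hSm]
      refine integral_congr_ae (Filter.Eventually.of_forall fun ξ => ?_)
      by_cases h : ξ ∈ S
      · simp only [Set.indicator_of_mem h,
          Set.indicator_of_mem (show ‖ξ‖ ∈ Set.Ioo 0 ε from h)]
      · simp only [Set.indicator_of_notMem h,
          Set.indicator_of_notMem (show ‖ξ‖ ∉ Set.Ioo 0 ε from h)]
    rw [h1]
    have h2 := MeasureTheory.integral_fun_norm_addHaar (volume : Measure E)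
      (Set.indicator (Set.Ioo 0 ε) g)
    rw [h2, finrank_euclideanSpace_fin]
    rw [nsmul_eq_mul, smul_eq_mul]
    rfl
  -- step 2 : rewrite inner integral over Ioo
  have hinner : ∫ y in Set.Ioi (0:ℝ), y ^ (n-1) • Set.indicator (Set.Ioo 0 ε) g y
      = ∫ y in Set.Ioo (0:ℝ) ε, y ^ (n-1) * g y := by
    have h3 : ∀ y : ℝ, y ^ (n-1) • Set.indicator (Set.Ioo 0 ε) g y
        = Set.indicator (Set.Ioo 0 ε) (fun y => y ^ (n-1) * g y) y := by
      intro y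
      simp only [Set.indicator_apply, smul_eq_mul, mul_ite, mul_zero]
    simp_rw [h3]
    rw [integral_indicator measurableSet_Ioo, Measure.restrict_restrict measurableSet_Ioo,
      Set.inter_eq_left.mpr Set.Ioo_subset_Ioi_self]
  -- step 3 : pointwise bound on Ioo
  have hpt : ∀ y ∈ Set.Ioo (0:ℝ) ε, y ^ (n-1) * g y ≤ y ^ q * Real.exp (-(c*t) * y^2) := by
    intro y hy
    have hy0 : (0:ℝ) < y := hy.1
    have hpow : (y:ℝ) ^ (n-1) * y ^ (2*s-2) = y ^ q := by
      rw [← Real.rpow_natCast y (n-1), ← Real.rpow_add hy0, hq_def]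
      congr 1
      have : ((n-1 : ℕ) : ℝ) = (n : ℝ) - 1 := by
        rw [Nat.cast_sub hn]; norm_num
      rw [this]; ring
    have hexp : Real.exp (-c * y^2 * t) = Real.exp (-(c*t) * y^2) := by ring_nf
    calc y ^ (n-1) * g y
        = (y ^ q * Real.exp (-(c*t) * y^2)) * Real.sin (gam * y * t)^2 := by
          simp only [hg_def]; rw [← hpow, hexp]; ring
      _ ≤ (y ^ q * Real.exp (-(c*t) * y^2)) * 1 := by
          apply mul_le_mul_of_nonneg_left (Real.sin_sq_le_one _)
          exact mul_nonneg (Real.rpow_nonneg hy0.le q) (Real.exp_pos _).le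
      _ = y ^ q * Real.exp (-(c*t) * y^2) := mul_one _
  -- integrability of both sides on Ioo 0 ε
  have hbd : ∀ y ∈ Set.Ioo (0:ℝ) ε, ‖y ^ q * Real.exp (-(c*t) * y^2)‖ ≤ 1 := by
    intro y hy
    have hb1 : y ^ q ≤ 1 := Real.rpow_le_one hy.1.le (le_of_lt (lt_trans hy.2 hε.2)) hq
    have hb2 : Real.exp (-(c*t) * y^2) ≤ 1 := by
      rw [Real.exp_le_one_iff]
      nlinarith [sq_nonneg y, mul_nonneg hc.le ht]
    rw [Real.norm_eq_abs, abs_of_nonneg (mul_nonneg (Real.rpow_nonneg hy.1.le q) (Real.exp_pos _).le)]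
    nlinarith [Real.rpow_nonneg hy.1.le q, Real.exp_pos (-(c*t) * y^2)]
  have hIb : IntegrableOn (fun y : ℝ => y ^ q * Real.exp (-(c*t) * y^2)) (Set.Ioo (0:ℝ) ε) := by
    apply Measure.integrableOn_of_bounded (measure_Ioo_lt_top).ne
      ((by fun_prop : Measurable fun y : ℝ => y ^ q * Real.exp (-(c*t) * y^2)).aestronglyMeasurable)
      (M := 1)
    filter_upwards [ae_restrict_mem measurableSet_Ioo] with y hy using hbd y hy
  have hIa : IntegrableOn (fun y : ℝ => y ^ (n-1) * g y) (Set.Ioo (0:ℝ) ε) := by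
    apply Measure.integrableOn_of_bounded (measure_Ioo_lt_top).ne
      ((by simp only [hg_def]; fun_prop :
        Measurable fun y : ℝ => y ^ (n-1) * g y).aestronglyMeasurable) (M := 1)
    filter_upwards [ae_restrict_mem measurableSet_Ioo] with y hy
    have h0 : 0 ≤ y ^ (n-1) * g y := by
      have hgy : 0 ≤ g y := by
        simp only [hg_def]
        have := Real.rpow_nonneg hy.1.le (2*s-2)
        positivity
      exact mul_nonneg (pow_nonneg hy.1.le _) hgy
    rw [Real.norm_eq_abs, abs_of_nonneg h0]
    calc y ^ (n-1) * g y ≤ y ^ q * Real.exp (-(c*t) * y^2) := hpt y hy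
      _ ≤ 1 := (le_abs_self _).trans ((Real.norm_eq_abs _) ▸ hbd y hy)
  -- combine
  have hIS : ∫ ξ in S, g ‖ξ‖ ≤ (n * V * K) * (1+t) ^ (-((q+1)/2)) := by
    rw [hpolar, hinner]
    have h4 : ∫ y in Set.Ioo (0:ℝ) ε, y ^ (n-1) * g y ≤ K * (1+t) ^ (-((q+1)/2)) :=
      le_trans (setIntegral_mono_on hIa hIb measurableSet_Ioo hpt) (hKb t ht)
    calc (n:ℝ) * (V * ∫ y in Set.Ioo (0:ℝ) ε, y ^ (n-1) * g y)
        ≤ (n:ℝ) * (V * (K * (1+t) ^ (-((q+1)/2)))) := by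
          apply mul_le_mul_of_nonneg_left
            (mul_le_mul_of_nonneg_left h4 hV.le) (Nat.cast_nonneg n)
      _ = (n * V * K) * (1+t) ^ (-((q+1)/2)) := by ring
  have hI0 : 0 ≤ ∫ ξ in S, g ‖ξ‖ := setIntegral_nonneg hSm (fun ξ _ => hnn ξ)
  have h1t : (0:ℝ) ≤ 1 + t := by linarith
  show (∫ ξ in S, g ‖ξ‖) ^ ((1:ℝ)/2) ≤ (n * V * K) ^ ((1:ℝ)/2) * (1+t) ^ ((1:ℝ)/2 - s/2 - (n:ℝ)/4)
  calc (∫ ξ in S, g ‖ξ‖) ^ ((1:ℝ)/2)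
      ≤ ((n * V * K) * (1+t) ^ (-((q+1)/2))) ^ ((1:ℝ)/2) :=
        Real.rpow_le_rpow hI0 hIS (by norm_num)
    _ = (n * V * K) ^ ((1:ℝ)/2) * ((1+t) ^ (-((q+1)/2))) ^ ((1:ℝ)/2) :=
        Real.mul_rpow hnV.le (Real.rpow_nonneg h1t _)
    _ = (n * V * K) ^ ((1:ℝ)/2) * (1+t) ^ ((1:ℝ)/2 - s/2 - (n:ℝ)/4) := by
        rw [← Real.rpow_mul h1t]
        congr 1
        rw [hq_def]; ring
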